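/- Let (T, ≤, ⊗, ⊕, e) be a symmetric duoidal lattice whose underlying order is total and such that for every t ∈ T the map c ↦ t ⊕ c preserves arbitrary infima, and let T^d carry the product order and coordinatewise operations. Then the generalized network distance on T^d-graphs satisfies: (1) d_N^⊕(G₁, G₂) = e whenever G₁ = G₂; (2) d_N^⊕(G₁, G₂) = d_N^⊕(G₂, G₁); and (3) d_N^⊕(G₁, G₂) ≤ d_N^⊕(G₁, G₃) ⊕ d_N^⊕(G₃, G₂), for all T^d-graphs G₁, G₂, G₃ on finite vertex sets. -/
import Mathlib


open CategoryTheory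

/-- A symmetric monoidal lattice `(L, ≤, ⊗, e)`: a complete lattice equipped with a
commutative monoid structure whose product is monotone in each argument and whose
unit is the bottom element `e = ⊥`. -/
structure SML (L : Type) [CompleteLattice L] where
  mul : L → L → L
  mul_comm : ∀ a b, mul a b = mul b a
  mul_assoc : ∀ a b c, mul (mul a b) c = mul a (mul b c)
  mul_bot : ∀ a, mul a ⊥ = a
  mul_mono : ∀ ⦃a a' b b'⦄, a ≤ a' → b ≤ b' → mul a b ≤ mul a' b'

namespace SML

variable {L : Type} [CompleteLattice L]

lemma le_mul (M : SML L) (a b : L) : a ≤ M.mul a b := by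
  have h := M.mul_mono (le_refl a) (bot_le (a := b))
  rwa [M.mul_bot] at h

/-- The `k`-fold product `t^{⊗k}`. -/
def pow (M : SML L) (t : L) : ℕ → L
  | 0 => ⊥
  | k + 1 => M.mul t (M.pow t k)

/-- The left adjoint `λ_t(s) = inf {c : s ≤ t ⊗ c}` of `c ↦ t ⊗ c`. -/
def lam (M : SML L) (t s : L) : L := sInf {c : L | s ≤ M.mul t c}

/-- For every `t`, the map `c ↦ t ⊗ c` preserves arbitrary infima. -/
def InfPreserving (M : SML L) : Prop :=
  ∀ (t : L) (S : Set L), M.mul t (sInf S) = ⨅ c ∈ S, M.mul t c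

/-- Product of a list of lattice elements. -/
def prodList (M : SML L) : List L → L
  | [] => ⊥
  | a :: l => M.mul a (M.prodList l)

end SML

/-- A symmetric duoidal lattice `(L, ≤, ⊗, ⊕, e)`: two symmetric monoidal lattice
structures `tmul = ⊗` and `omul = ⊕` on the same complete lattice, with the same unit
`e = ⊥`, satisfying the generalized Minkowski inequality
`(s ⊕ t) ⊗ (s' ⊕ t') ≤ (s ⊗ s') ⊕ (t ⊗ t')`. -/
structure SDL (L : Type) [CompleteLattice L] where
  tmul : SML L
  omul : SML L
  duoidal : ∀ s t s' t' : L,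
    tmul.mul (omul.mul s t) (omul.mul s' t') ≤ omul.mul (tmul.mul s s') (tmul.mul t t')

/-- The directed graph distance `δ⃗_⊕(G, G') = sup_{v,v'} λ_{G(v,v')}(G'(v,v'))`. -/
noncomputable def dirDist {L : Type} [CompleteLattice L] (M : SML L) {V : Type}
    (G G' : V → V → L) : L :=
  ⨆ v : V, ⨆ v' : V, M.lam (G v v') (G' v v')

/-- The graph distance `δ_⊕(G, G') = sup {δ⃗_⊕(G, G'), δ⃗_⊕(G', G)}`. -/
noncomputable def graphDist {L : Type} [CompleteLattice L] (M : SML L) {V : Type}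
    (G G' : V → V → L) : L :=
  dirDist M G G' ⊔ dirDist M G' G

/-- The `d`-fold product symmetric monoidal lattice `T^d`, with the product order and
coordinate-wise monoidal product. -/
def SML.pi {T : Type} [CompleteLattice T] (M : SML T) (d : ℕ) : SML (Fin d → T) where
  mul a b := fun i => M.mul (a i) (b i)
  mul_comm a b := funext fun i => M.mul_comm _ _
  mul_assoc a b c := funext fun i => M.mul_assoc _ _ _
  mul_bot a := funext fun i => M.mul_bot _
  mul_mono := by
    intro a a' b b' h h' i
    exact M.mul_mono (h i) (h' i)

/-- The `d`-fold product symmetric duoidal lattice `T^d`. -/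
def SDL.pi {T : Type} [CompleteLattice T] (D : SDL T) (d : ℕ) : SDL (Fin d → T) where
  tmul := D.tmul.pi d
  omul := D.omul.pi d
  duoidal := by
    intro s t s' t' i
    exact D.duoidal _ _ _ _

/-- The generalized network distance `d_N^⊕(G₁, G₂)`: the infimum, over all
correspondences `C ⊆ V₁ × V₂` (both projections surjective), of
`p(δ_⊕(π₁^*G₁, π₂^*G₂))`, where `p(t₁, …, t_d) = sup_i t_i`. -/
noncomputable def networkDist {T : Type} [CompleteLattice T] {d : ℕ}
    (M : SML (Fin d → T)) {V₁ V₂ : Type}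
    (G₁ : V₁ → V₁ → Fin d → T) (G₂ : V₂ → V₂ → Fin d → T) : T :=
  sInf { x : T | ∃ C : Set (V₁ × V₂),
    (∀ v₁ : V₁, ∃ c ∈ C, c.1 = v₁) ∧ (∀ v₂ : V₂, ∃ c ∈ C, c.2 = v₂) ∧
    x = ⨆ i : Fin d,
      graphDist M (fun c c' : C => G₁ c.1.1 c'.1.1) (fun c c' : C => G₂ c.1.2 c'.1.2) i }

section AuxLemmas

variable {L : Type} [CompleteLattice L]

lemma SML.lam_le (M : SML L) {t s c : L} (h : s ≤ M.mul t c) : M.lam t s ≤ c :=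
  sInf_le h

lemma SML.lam_self (M : SML L) (t : L) : M.lam t t = ⊥ :=
  le_antisymm (M.lam_le (by rw [M.mul_bot])) bot_le

lemma SML.mul_iInf (M : SML L) (h : M.InfPreserving) (t : L) {ι : Type} (f : ι → L) :
    M.mul t (⨅ j, f j) = ⨅ j, M.mul t (f j) := by
  rw [iInf, h t (Set.range f), iInf_range]

lemma SML.le_mul_lam (M : SML L) (h : M.InfPreserving) (t s : L) :
    s ≤ M.mul t (M.lam t s) := by
  rw [SML.lam, h t]
  exact le_iInf₂ fun c hc => hc

lemma SML.lam_triangle (M : SML L) (h : M.InfPreserving) (t u s : L) :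
    M.lam t s ≤ M.mul (M.lam t u) (M.lam u s) := by
  apply M.lam_le
  calc s ≤ M.mul u (M.lam u s) := M.le_mul_lam h u s
    _ ≤ M.mul (M.mul t (M.lam t u)) (M.lam u s) := M.mul_mono (M.le_mul_lam h t u) le_rfl
    _ = M.mul t (M.mul (M.lam t u) (M.lam u s)) := M.mul_assoc _ _ _

lemma SML.pi_infPreserving {T : Type} [CompleteLattice T] (M : SML T)
    (h : M.InfPreserving) (d : ℕ) : (M.pi d).InfPreserving := by
  intro t S
  funext i
  show M.mul (t i) (sInf S i) = (⨅ c ∈ S, (M.pi d).mul t c) i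
  have h1 : sInf S i = ⨅ c : S, (c : Fin d → T) i := sInf_apply
  rw [h1, M.mul_iInf h]
  simp only [iInf_apply]
  rw [iInf_subtype']
  rfl

lemma le_dirDist (M : SML L) {V : Type} (A B : V → V → L) (v v' : V) :
    M.lam (A v v') (B v v') ≤ dirDist M A B :=
  le_iSup_of_le v (le_iSup_of_le v' le_rfl)

lemma dirDist_reindex (M : SML L) {ι κ : Type} (e : ι ≃ κ) (A B : κ → κ → L) :
    dirDist M (fun v v' => A (e v) (e v')) (fun v v' => B (e v) (e v')) = dirDist M A B := by
  unfold dirDist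
  calc (⨆ v : ι, ⨆ v' : ι, M.lam (A (e v) (e v')) (B (e v) (e v')))
      = ⨆ v : ι, ⨆ w' : κ, M.lam (A (e v) w') (B (e v) w') :=
        iSup_congr fun v => e.iSup_comp (g := fun w' => M.lam (A (e v) w') (B (e v) w'))
    _ = ⨆ w : κ, ⨆ w' : κ, M.lam (A w w') (B w w') :=
        e.iSup_comp (g := fun w => ⨆ w' : κ, M.lam (A w w') (B w w'))

lemma networkDist_symm_le {T : Type} [CompleteLattice T] {d : ℕ} (M : SML (Fin d → T))
    {V₁ V₂ : Type} (G₁ : V₁ → V₁ → Fin d → T) (G₂ : V₂ → V₂ → Fin d → T) :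
    networkDist M G₁ G₂ ≤ networkDist M G₂ G₁ := by
  apply le_sInf
  rintro x ⟨C, hC1, hC2, rfl⟩
  apply sInf_le
  refine ⟨Prod.swap ⁻¹' C, ?_, ?_, ?_⟩
  · intro v₁
    obtain ⟨c, hc, h⟩ := hC2 v₁
    exact ⟨(v₁, c.1), show (c.1, v₁) ∈ C by rw [← h]; exact hc, rfl⟩
  · intro v₂
    obtain ⟨c, hc, h⟩ := hC1 v₂
    exact ⟨(c.2, v₂), show (v₂, c.2) ∈ C by rw [← h]; exact hc, rfl⟩
  · let e : (Prod.swap ⁻¹' C : Set (V₁ × V₂)) ≃ C :=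
      ⟨fun p => ⟨p.1.swap, p.2⟩, fun q => ⟨q.1.swap, q.2⟩, fun p => rfl, fun q => rfl⟩
    have h1 : dirDist M (fun p p' : (Prod.swap ⁻¹' C : Set (V₁ × V₂)) => G₁ p.1.1 p'.1.1)
        (fun p p' => G₂ p.1.2 p'.1.2)
        = dirDist M (fun q q' : C => G₁ q.1.2 q'.1.2) (fun q q' => G₂ q.1.1 q'.1.1) :=
      dirDist_reindex M e (fun q q' : C => G₁ q.1.2 q'.1.2) (fun q q' => G₂ q.1.1 q'.1.1)
    have h2 : dirDist M (fun p p' : (Prod.swap ⁻¹' C : Set (V₁ × V₂)) => G₂ p.1.2 p'.1.2)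
        (fun p p' => G₁ p.1.1 p'.1.1)
        = dirDist M (fun q q' : C => G₂ q.1.1 q'.1.1) (fun q q' => G₁ q.1.2 q'.1.2) :=
      dirDist_reindex M e (fun q q' : C => G₂ q.1.1 q'.1.1) (fun q q' => G₁ q.1.2 q'.1.2)
    have key : graphDist M
        (fun p p' : (Prod.swap ⁻¹' C : Set (V₁ × V₂)) => G₁ p.1.1 p'.1.1)
        (fun p p' => G₂ p.1.2 p'.1.2)
        = graphDist M (fun q q' : C => G₂ q.1.1 q'.1.1) (fun q q' => G₁ q.1.2 q'.1.2) := by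
      unfold graphDist
      rw [h1, h2, sup_comm]
    rw [key]

end AuxLemmas

/-- Let `(T, ≤, ⊗, ⊕, e)` be a symmetric duoidal lattice on a complete
linear order such that every map `c ↦ t ⊕ c` preserves arbitrary infima, and let `T^d`
carry the product order and coordinatewise operations. Then the generalized network
distance on `T^d`-graphs with finite vertex sets satisfies: it is `e` on equal graphs,
it is symmetric, and it satisfies the triangle inequality with respect to `⊕`. -/
theorem networkDist_pseudometric {T : Type} [CompleteLinearOrder T] (D : SDL T)
    (hinf : D.omul.InfPreserving) (d : ℕ)
    {V₁ V₂ V₃ : Type} [Fintype V₁] [Fintype V₂] [Fintype V₃]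
    (G₁ : V₁ → V₁ → Fin d → T) (G₂ : V₂ → V₂ → Fin d → T) (G₃ : V₃ → V₃ → Fin d → T) :
    (∀ (V : Type) [Fintype V] (G G' : V → V → Fin d → T),
      G = G' → networkDist (D.omul.pi d) G G' = ⊥) ∧
    (networkDist (D.omul.pi d) G₁ G₂ = networkDist (D.omul.pi d) G₂ G₁) ∧
    (networkDist (D.omul.pi d) G₁ G₂ ≤
      D.omul.mul (networkDist (D.omul.pi d) G₁ G₃) (networkDist (D.omul.pi d) G₃ G₂)) := by
  have hN : (D.omul.pi d).InfPreserving := D.omul.pi_infPreserving hinf d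
  refine ⟨?_, ?_, ?_⟩
  · -- reflexivity
    intro V _ G G' hGG'
    subst hGG'
    refine le_antisymm ?_ bot_le
    apply sInf_le
    refine ⟨{p : V × V | p.1 = p.2}, fun v => ⟨(v, v), rfl, rfl⟩, fun v => ⟨(v, v), rfl, rfl⟩, ?_⟩
    have hfun : (fun c c' : {p : V × V | p.1 = p.2} => G c.1.1 c'.1.1)
        = fun c c' => G c.1.2 c'.1.2 := by
      funext c c'
      have e1 : c.1.1 = c.1.2 := c.2
      have e2 : c'.1.1 = c'.1.2 := c'.2
      rw [e1, e2]
    rw [hfun]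
    have hg : graphDist (D.omul.pi d)
        (fun c c' : {p : V × V | p.1 = p.2} => G c.1.2 c'.1.2)
        (fun c c' => G c.1.2 c'.1.2) = ⊥ := by
      unfold graphDist dirDist
      simp [SML.lam_self]
    rw [hg]
    simp
  · -- symmetry
    exact le_antisymm (networkDist_symm_le _ G₁ G₂) (networkDist_symm_le _ G₂ G₁)
  · -- triangle inequality
    have hmul : ∀ A B : Set T, D.omul.mul (sInf A) (sInf B)
        = ⨅ x ∈ A, ⨅ y ∈ B, D.omul.mul x y := by
      intro A B
      rw [D.omul.mul_comm, hinf _ A]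
      refine iInf_congr fun x => iInf_congr fun hx => ?_
      rw [D.omul.mul_comm, hinf _ B]
    show networkDist (D.omul.pi d) G₁ G₂ ≤
      D.omul.mul (sInf _) (sInf _)
    rw [hmul]
    refine le_iInf₂ fun x hx => le_iInf₂ fun y hy => ?_
    obtain ⟨C₁₃, h13a, h13b, rfl⟩ := hx
    obtain ⟨C₃₂, h32a, h32b, rfl⟩ := hy
    refine sInf_le_of_le
      ⟨{p : V₁ × V₂ | ∃ v₃, (p.1, v₃) ∈ C₁₃ ∧ (v₃, p.2) ∈ C₃₂}, ?_, ?_, rfl⟩ ?_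
    · intro v₁
      obtain ⟨c, hc, h⟩ := h13a v₁
      obtain ⟨c', hc', h'⟩ := h32a c.2
      exact ⟨(v₁, c'.2), ⟨c.2, by rw [← h]; exact hc, by rw [← h']; exact hc'⟩, rfl⟩
    · intro v₂
      obtain ⟨c', hc', h'⟩ := h32b v₂
      obtain ⟨c, hc, h⟩ := h13b c'.1
      exact ⟨(c.1, v₂), ⟨c'.1, by rw [← h]; exact hc, by rw [← h']; exact hc'⟩, rfl⟩
    · -- the composed correspondence realizes the triangle bound
      have main : graphDist (D.omul.pi d)
          (fun c c' : {p : V₁ × V₂ | ∃ v₃, (p.1, v₃) ∈ C₁₃ ∧ (v₃, p.2) ∈ C₃₂} =>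
            G₁ c.1.1 c'.1.1)
          (fun c c' => G₂ c.1.2 c'.1.2)
          ≤ (D.omul.pi d).mul
            (graphDist (D.omul.pi d) (fun c c' : C₁₃ => G₁ c.1.1 c'.1.1)
              (fun c c' => G₃ c.1.2 c'.1.2))
            (graphDist (D.omul.pi d) (fun c c' : C₃₂ => G₃ c.1.1 c'.1.1)
              (fun c c' => G₂ c.1.2 c'.1.2)) := by
        apply sup_le
        · refine iSup_le fun c => iSup_le fun c' => ?_
          obtain ⟨v₃, h1, h2⟩ :
              ∃ v₃, (c.1.1, v₃) ∈ C₁₃ ∧ (v₃, c.1.2) ∈ C₃₂ := c.2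
          obtain ⟨v₃', h1', h2'⟩ :
              ∃ v₃, (c'.1.1, v₃) ∈ C₁₃ ∧ (v₃, c'.1.2) ∈ C₃₂ := c'.2
          refine le_trans
            ((D.omul.pi d).lam_triangle hN (G₁ c.1.1 c'.1.1) (G₃ v₃ v₃') (G₂ c.1.2 c'.1.2)) ?_
          exact (D.omul.pi d).mul_mono
            (le_trans (le_dirDist (D.omul.pi d) (fun q q' : C₁₃ => G₁ q.1.1 q'.1.1)
              (fun q q' => G₃ q.1.2 q'.1.2) ⟨(c.1.1, v₃), h1⟩ ⟨(c'.1.1, v₃'), h1'⟩) le_sup_left)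
            (le_trans (le_dirDist (D.omul.pi d) (fun q q' : C₃₂ => G₃ q.1.1 q'.1.1)
              (fun q q' => G₂ q.1.2 q'.1.2) ⟨(v₃, c.1.2), h2⟩ ⟨(v₃', c'.1.2), h2'⟩) le_sup_left)
        · refine iSup_le fun c => iSup_le fun c' => ?_
          obtain ⟨v₃, h1, h2⟩ :
              ∃ v₃, (c.1.1, v₃) ∈ C₁₃ ∧ (v₃, c.1.2) ∈ C₃₂ := c.2
          obtain ⟨v₃', h1', h2'⟩ :
              ∃ v₃, (c'.1.1, v₃) ∈ C₁₃ ∧ (v₃, c'.1.2) ∈ C₃₂ := c'.2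
          refine le_trans
            ((D.omul.pi d).lam_triangle hN (G₂ c.1.2 c'.1.2) (G₃ v₃ v₃') (G₁ c.1.1 c'.1.1)) ?_
          rw [(D.omul.pi d).mul_comm]
          exact (D.omul.pi d).mul_mono
            (le_trans (le_dirDist (D.omul.pi d) (fun q q' : C₁₃ => G₃ q.1.2 q'.1.2)
              (fun q q' => G₁ q.1.1 q'.1.1) ⟨(c.1.1, v₃), h1⟩ ⟨(c'.1.1, v₃'), h1'⟩) le_sup_right)
            (le_trans (le_dirDist (D.omul.pi d) (fun q q' : C₃₂ => G₂ q.1.2 q'.1.2)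
              (fun q q' => G₃ q.1.1 q'.1.1) ⟨(v₃, c.1.2), h2⟩ ⟨(v₃', c'.1.2), h2'⟩) le_sup_right)
      refine iSup_le fun i => le_trans (main i) ?_
      exact D.omul.mul_mono (le_iSup _ i) (le_iSup _ i)
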